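/- Let (A₁,B₁,C₁,D₁) and (A₂,B₂,C₂,D₂) be minimal realizations of m×m transfer functions R and R_s, and suppose both systems are negative imaginary. Let R_T(s) = R(s) + R_s(s). Then: (a) j(R_T(jω) − R_T(jω)ᴴ) ⪰ 0 for every ω ∈ (0,∞) such that jω is an eigenvalue of neither A₁ nor A₂; (b) for every ω₀ ∈ (0,∞) such that jω₀ is an eigenvalue of A₁ or A₂, the limit lim_{s→jω₀}(s − jω₀)·jR_T(s) exists and is positive semidefinite Hermitian. Moreover, if in addition A₁ is Hurwitz and the system (A₂,B₂,C₂,D₂) is strictly negative imaginary, then j(R_T(jω) − R_T(jω)ᴴ) ≻ 0 for every ω ∈ (0,∞), so R_T, with Hurwitz state matrix diag(A₁,A₂), is strictly negative imaginary. -/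

import Mathlib

open Matrix Filter Topology ComplexOrder

/-- The (complex) eigenvalues of a real square matrix. -/
noncomputable def eigs {k : Type*} [Fintype k] [DecidableEq k] (A : Matrix k k ℝ) : Set ℂ :=
  spectrum ℂ (A.map Complex.ofReal)

/-- A real square matrix is Hurwitz if all of its (complex) eigenvalues have negative real
part. -/
noncomputable def IsHurwitz {k : Type*} [Fintype k] [DecidableEq k] (A : Matrix k k ℝ) : Prop :=
  ∀ μ ∈ eigs A, μ.re < 0

/-- Transfer function `R(s) = C (sI - A)⁻¹ B + D` of a real state-space system, as a
complex matrix. -/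
noncomputable def tf {n m : ℕ} (A : Matrix (Fin n) (Fin n) ℝ) (B : Matrix (Fin n) (Fin m) ℝ)
    (C : Matrix (Fin m) (Fin n) ℝ) (D : Matrix (Fin m) (Fin m) ℝ) (s : ℂ) :
    Matrix (Fin m) (Fin m) ℂ :=
  C.map (Complex.ofReal) * (s • (1 : Matrix (Fin n) (Fin n) ℂ) - A.map Complex.ofReal)⁻¹ *
      B.map Complex.ofReal + D.map Complex.ofReal

/-- A state-space realization `(A,B,C,D)` is minimal if the controllability matrix and the
observability matrix both have rank `n`. -/
def IsMinimal {n m : ℕ} (A : Matrix (Fin n) (Fin n) ℝ) (B : Matrix (Fin n) (Fin m) ℝ)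
    (C : Matrix (Fin m) (Fin n) ℝ) : Prop :=
  (Matrix.of fun (i : Fin n) (p : Fin n × Fin m) => (A ^ (p.1 : ℕ) * B) i p.2).rank = n ∧
  (Matrix.of fun (p : Fin n × Fin m) (i : Fin n) => (C * A ^ (p.1 : ℕ)) p.2 i).rank = n

/-- The system `(A,B,C,D)` is negative imaginary (NI). -/
noncomputable def IsNI {n m : ℕ} (A : Matrix (Fin n) (Fin n) ℝ) (B : Matrix (Fin n) (Fin m) ℝ)
    (C : Matrix (Fin m) (Fin n) ℝ) (D : Matrix (Fin m) (Fin m) ℝ) : Prop :=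
  (∀ μ ∈ eigs A, μ ≠ 0 ∧ μ.re ≤ 0) ∧
  (∀ ω : ℝ, 0 < ω → (Complex.I * ω) ∉ eigs A →
    (Complex.I • (tf A B C D (Complex.I * ω) - (tf A B C D (Complex.I * ω))ᴴ)).PosSemidef) ∧
  (∀ ω : ℝ, 0 < ω → (Complex.I * ω) ∈ eigs A →
    ∃ K : Matrix (Fin m) (Fin m) ℂ,
      Tendsto (fun s : ℂ => (s - Complex.I * ω) • Complex.I • tf A B C D s)
        (𝓝[≠] (Complex.I * ω)) (𝓝 K) ∧ K.PosSemidef)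

/-- The system `(A,B,C,D)` is strictly negative imaginary (SNI). -/
noncomputable def IsSNI {n m : ℕ} (A : Matrix (Fin n) (Fin n) ℝ) (B : Matrix (Fin n) (Fin m) ℝ)
    (C : Matrix (Fin m) (Fin n) ℝ) (D : Matrix (Fin m) (Fin m) ℝ) : Prop :=
  IsHurwitz A ∧
  (∀ ω : ℝ, 0 < ω →
    (Complex.I • (tf A B C D (Complex.I * ω) - (tf A B C D (Complex.I * ω))ᴴ)).PosDef)


lemma mem_eigs_iff_det {k : Type*} [Fintype k] [DecidableEq k] (A : Matrix k k ℝ) (μ : ℂ) :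
    μ ∈ eigs A ↔ (μ • (1 : Matrix k k ℂ) - A.map Complex.ofReal).det = 0 := by
  rw [eigs, spectrum.mem_iff, Matrix.isUnit_iff_isUnit_det, isUnit_iff_ne_zero, not_ne_iff,
    Algebra.algebraMap_eq_smul_one]

lemma tf_continuousAt {n m : ℕ} (A : Matrix (Fin n) (Fin n) ℝ) (B : Matrix (Fin n) (Fin m) ℝ)
    (C : Matrix (Fin m) (Fin n) ℝ) (D : Matrix (Fin m) (Fin m) ℝ) {p : ℂ} (hp : p ∉ eigs A) :
    ContinuousAt (tf A B C D) p := by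
  have hdet : (p • (1 : Matrix (Fin n) (Fin n) ℂ) - A.map Complex.ofReal).det ≠ 0 := by
    simpa [mem_eigs_iff_det] using hp
  have h1 : Continuous fun s : ℂ => s • (1 : Matrix (Fin n) (Fin n) ℂ) - A.map Complex.ofReal :=
    (continuous_id.smul continuous_const).sub continuous_const
  have hinv : ContinuousAt (fun s : ℂ =>
      (s • (1 : Matrix (Fin n) (Fin n) ℂ) - A.map Complex.ofReal)⁻¹) p := by
    simp only [Matrix.inv_def, Ring.inverse_eq_inv]
    exact (h1.matrix_det.continuousAt.inv₀ hdet).smul h1.matrix_adjugate.continuousAt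
  unfold tf
  have hL : Continuous (fun X : Matrix (Fin n) (Fin n) ℂ =>
      C.map Complex.ofReal * X * B.map Complex.ofReal + D.map Complex.ofReal) :=
    ((continuous_const.matrix_mul continuous_id).matrix_mul continuous_const).add continuous_const
  exact hL.continuousAt.comp hinv

lemma tendsto_sub_smul_zero {n m : ℕ} (A : Matrix (Fin n) (Fin n) ℝ) (B : Matrix (Fin n) (Fin m) ℝ)
    (C : Matrix (Fin m) (Fin n) ℝ) (D : Matrix (Fin m) (Fin m) ℝ) {p : ℂ} (hp : p ∉ eigs A) :
    Tendsto (fun s : ℂ => (s - p) • Complex.I • tf A B C D s) (𝓝[≠] p) (𝓝 0) := by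
  have h : ContinuousAt (fun s : ℂ => (s - p) • Complex.I • tf A B C D s) p :=
    (continuousAt_id.sub continuousAt_const).smul
      ((tf_continuousAt A B C D hp).const_smul Complex.I)
  have h2 := h.tendsto
  simp only [id, sub_self, zero_smul] at h2
  exact h2.mono_left nhdsWithin_le_nhds

lemma smul_sub_conj_add {m : ℕ} (X Y : Matrix (Fin m) (Fin m) ℂ) :
    Complex.I • ((X + Y) - (X + Y)ᴴ) = Complex.I • (X - Xᴴ) + Complex.I • (Y - Yᴴ) := by
  rw [Matrix.conjTranspose_add, smul_sub, smul_sub, smul_sub, smul_add, smul_add]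
  abel

/-- Lemma: the sum of two NI systems is NI; moreover the sum of an NI system and an SNI system
is SNI. -/
theorem sum_of_ni_is_ni {n₁ n₂ m : ℕ}
    (A₁ : Matrix (Fin n₁) (Fin n₁) ℝ) (B₁ : Matrix (Fin n₁) (Fin m) ℝ)
    (C₁ : Matrix (Fin m) (Fin n₁) ℝ) (D₁ : Matrix (Fin m) (Fin m) ℝ)
    (A₂ : Matrix (Fin n₂) (Fin n₂) ℝ) (B₂ : Matrix (Fin n₂) (Fin m) ℝ)
    (C₂ : Matrix (Fin m) (Fin n₂) ℝ) (D₂ : Matrix (Fin m) (Fin m) ℝ)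
    (hmin₁ : IsMinimal A₁ B₁ C₁) (hmin₂ : IsMinimal A₂ B₂ C₂)
    (hNI₁ : IsNI A₁ B₁ C₁ D₁) (hNI₂ : IsNI A₂ B₂ C₂ D₂) :
    (∀ ω : ℝ, 0 < ω → (Complex.I * ω) ∉ eigs A₁ → (Complex.I * ω) ∉ eigs A₂ →
      (Complex.I •
        ((tf A₁ B₁ C₁ D₁ (Complex.I * ω) + tf A₂ B₂ C₂ D₂ (Complex.I * ω)) -
          (tf A₁ B₁ C₁ D₁ (Complex.I * ω) + tf A₂ B₂ C₂ D₂ (Complex.I * ω))ᴴ)).PosSemidef) ∧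
    (∀ ω : ℝ, 0 < ω → ((Complex.I * ω) ∈ eigs A₁ ∨ (Complex.I * ω) ∈ eigs A₂) →
      ∃ K : Matrix (Fin m) (Fin m) ℂ,
        Tendsto (fun s : ℂ =>
            (s - Complex.I * ω) • Complex.I • (tf A₁ B₁ C₁ D₁ s + tf A₂ B₂ C₂ D₂ s))
          (𝓝[≠] (Complex.I * ω)) (𝓝 K) ∧ K.PosSemidef) ∧
    (IsHurwitz A₁ → IsSNI A₂ B₂ C₂ D₂ →
      (∀ ω : ℝ, 0 < ω →
        (Complex.I •
          ((tf A₁ B₁ C₁ D₁ (Complex.I * ω) + tf A₂ B₂ C₂ D₂ (Complex.I * ω)) -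
            (tf A₁ B₁ C₁ D₁ (Complex.I * ω) + tf A₂ B₂ C₂ D₂ (Complex.I * ω))ᴴ)).PosDef) ∧
      IsHurwitz (Matrix.fromBlocks A₁ 0 0 A₂)) := by
  obtain ⟨hspec₁, hfreq₁, hpole₁⟩ := hNI₁
  obtain ⟨hspec₂, hfreq₂, hpole₂⟩ := hNI₂
  refine ⟨?_, ?_, ?_⟩
  · intro ω hω h1 h2
    rw [smul_sub_conj_add]
    exact (hfreq₁ ω hω h1).add (hfreq₂ ω hω h2)
  · intro ω hω hmem
    have hsplit : (fun s : ℂ =>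
        (s - Complex.I * ω) • Complex.I • (tf A₁ B₁ C₁ D₁ s + tf A₂ B₂ C₂ D₂ s)) =
        fun s : ℂ => (s - Complex.I * ω) • Complex.I • tf A₁ B₁ C₁ D₁ s +
          (s - Complex.I * ω) • Complex.I • tf A₂ B₂ C₂ D₂ s := by
      funext s; rw [smul_add, smul_add]
    by_cases h1 : (Complex.I * ω) ∈ eigs A₁ <;> by_cases h2 : (Complex.I * ω) ∈ eigs A₂
    · obtain ⟨K₁, hK₁, hP₁⟩ := hpole₁ ω hω h1
      obtain ⟨K₂, hK₂, hP₂⟩ := hpole₂ ω hω h2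
      exact ⟨K₁ + K₂, by rw [hsplit]; exact hK₁.add hK₂, hP₁.add hP₂⟩
    · obtain ⟨K₁, hK₁, hP₁⟩ := hpole₁ ω hω h1
      refine ⟨K₁, ?_, hP₁⟩
      rw [hsplit]
      simpa using hK₁.add (tendsto_sub_smul_zero A₂ B₂ C₂ D₂ h2)
    · obtain ⟨K₂, hK₂, hP₂⟩ := hpole₂ ω hω h2
      refine ⟨K₂, ?_, hP₂⟩
      rw [hsplit]
      simpa using (tendsto_sub_smul_zero A₁ B₁ C₁ D₁ h1).add hK₂
    · exact absurd hmem (by simp [h1, h2])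
  · intro hH1 hSNI2
    constructor
    · intro ω hω
      have h1 : (Complex.I * ω) ∉ eigs A₁ := by
        intro hmem
        have := hH1 _ hmem
        simp [Complex.mul_re] at this
      rw [smul_sub_conj_add]
      exact Matrix.PosDef.posSemidef_add (hfreq₁ ω hω h1) (hSNI2.2 ω hω)
    · intro μ hμ
      rw [mem_eigs_iff_det] at hμ
      have hdec : (fromBlocks A₁ 0 0 A₂).map Complex.ofReal =
          fromBlocks (A₁.map Complex.ofReal) 0 0 (A₂.map Complex.ofReal) := by
        rw [Matrix.fromBlocks_map]; simp
      rw [hdec, ← Matrix.fromBlocks_one, Matrix.fromBlocks_smul, sub_eq_add_neg,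
        Matrix.fromBlocks_neg, Matrix.fromBlocks_add] at hμ
      simp only [smul_zero, neg_zero, add_zero, ← sub_eq_add_neg,
        Matrix.det_fromBlocks_zero₂₁] at hμ
      rcases mul_eq_zero.mp hμ with h | h
      · exact hH1 μ ((mem_eigs_iff_det A₁ μ).mpr h)
      · exact hSNI2.1 μ ((mem_eigs_iff_det A₂ μ).mpr h)
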